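/- Let q be a positive odd integer coprime to 4. With Σ(4,q) = {i/4 + j/q : 1 ≤ i ≤ 3, 1 ≤ j ≤ q−1} and σ(4,q) defined combinatorially as the signed count of elements outside minus inside (1/2,3/2), one has σ(4,q) = 4·⌊q/4⌋ − 3(q−1). -/

import Mathlib

/-- The multiset of pairs `(i,j)` with `1 ≤ i ≤ p-1`, `1 ≤ j ≤ q-1`. -/
def torusPairs (p q : ℕ) : Finset (ℕ × ℕ) :=
  Finset.Icc 1 (p - 1) ×ˢ Finset.Icc 1 (q - 1)

/-- The value `i/p + j/q` associated to a pair. -/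
def torusVal (p q : ℕ) (ij : ℕ × ℕ) : ℚ :=
  (ij.1 : ℚ) / p + (ij.2 : ℚ) / q

/-- Number of elements of the multiset `Σ(p,q)` lying in the open interval `(1/2, 3/2)`. -/
def torusInCount (p q : ℕ) : ℕ :=
  ((torusPairs p q).filter
    (fun ij => (1 : ℚ) / 2 < torusVal p q ij ∧ torusVal p q ij < 3 / 2)).card

/-- Combinatorial signature of the torus knot `T(p,q)`:
`#Σ − 2·#(Σ ∩ (1/2, 3/2))`. -/
def torusSig (p q : ℕ) : ℤ :=
  ((torusPairs p q).card : ℤ) - 2 * (torusInCount p q : ℤ)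

theorem stmt_2 (q : ℕ) (hq : 0 < q) (hodd : Odd q) (hcop : Nat.Coprime 4 q) :
    torusSig 4 q = 4 * ((q / 4 : ℕ) : ℤ) - 3 * ((q : ℤ) - 1) := by
  have hq' : (0:ℚ) < q := by exact_mod_cast hq
  have key : ∀ i j : ℕ, ((1 : ℚ) / 2 < torusVal 4 q (i,j) ∧ torusVal 4 q (i,j) < 3 / 2)
      ↔ (2*q < i*q + 4*j ∧ i*q + 4*j < 6*q) := by
    intro i j
    have hv : torusVal 4 q (i,j) = ((i*q + 4*j : ℕ) : ℚ) / (4*q) := by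
      unfold torusVal
      push_cast
      field_simp
    rw [hv, lt_div_iff₀ (by positivity), div_lt_iff₀ (by positivity)]
    constructor
    · rintro ⟨h1, h2⟩
      push_cast at h1 h2
      constructor <;> qify <;> linarith
    · rintro ⟨h1, h2⟩
      qify at h1 h2
      push_cast
      constructor <;> linarith
  have hin : torusInCount 4 q =
      ((Finset.Icc 1 (q-1)).filter (fun j => 2*q < 1*q + 4*j ∧ 1*q + 4*j < 6*q)).card
      + ((Finset.Icc 1 (q-1)).filter (fun j => 2*q < 2*q + 4*j ∧ 2*q + 4*j < 6*q)).card
      + ((Finset.Icc 1 (q-1)).filter (fun j => 2*q < 3*q + 4*j ∧ 3*q + 4*j < 6*q)).card := by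
    unfold torusInCount torusPairs
    rw [Finset.card_filter]
    rw [Finset.sum_product]
    rw [show Finset.Icc 1 (4-1) = ({1,2,3} : Finset ℕ) by decide]
    rw [Finset.sum_insert (by decide), Finset.sum_insert (by decide), Finset.sum_singleton]
    rw [← Finset.card_filter, ← Finset.card_filter, ← Finset.card_filter]
    have f : ∀ i : ℕ, Finset.filter (fun j => (1:ℚ)/2 < torusVal 4 q (i, j) ∧ torusVal 4 q (i, j) < 3/2) (Finset.Icc 1 (q-1))
        = Finset.filter (fun j => 2*q < i*q+4*j ∧ i*q+4*j < 6*q) (Finset.Icc 1 (q-1)) :=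
      fun i => Finset.filter_congr (fun j _ => key i j)
    rw [f 1, f 2, f 3]; omega
  have hcard : (torusPairs 4 q).card = 3 * (q - 1) := by
    unfold torusPairs
    rw [Finset.card_product, Nat.card_Icc, Nat.card_Icc]
    omega
  obtain ⟨m, hm⟩ := hodd
  have hr : q % 4 = 1 ∨ q % 4 = 3 := by omega
  rcases hr with hr | hr
  · obtain ⟨k, hk⟩ : ∃ k, q = 4*k + 1 := ⟨q/4, by omega⟩
    have e1 : ((Finset.Icc 1 (q-1)).filter (fun j => 2*q < 1*q + 4*j ∧ 1*q + 4*j < 6*q))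
        = Finset.Icc (k+1) (q-1) := by
      ext j; simp only [Finset.mem_filter, Finset.mem_Icc]; omega
    have e2 : ((Finset.Icc 1 (q-1)).filter (fun j => 2*q < 2*q + 4*j ∧ 2*q + 4*j < 6*q))
        = Finset.Icc 1 (q-1) := by
      ext j; simp only [Finset.mem_filter, Finset.mem_Icc]; omega
    have e3 : ((Finset.Icc 1 (q-1)).filter (fun j => 2*q < 3*q + 4*j ∧ 3*q + 4*j < 6*q))
        = Finset.Icc 1 (3*k) := by
      ext j; simp only [Finset.mem_filter, Finset.mem_Icc]; omega
    have hin' : torusInCount 4 q = (q - 1 - k) + (q - 1) + 3*k := by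
      rw [hin, e1, e2, e3, Nat.card_Icc, Nat.card_Icc, Nat.card_Icc]; omega
    unfold torusSig
    rw [hcard, hin']
    have h4 : q / 4 = k := by omega
    rw [h4]
    push_cast
    omega
  · obtain ⟨k, hk⟩ : ∃ k, q = 4*k + 3 := ⟨q/4, by omega⟩
    have e1 : ((Finset.Icc 1 (q-1)).filter (fun j => 2*q < 1*q + 4*j ∧ 1*q + 4*j < 6*q))
        = Finset.Icc (k+1) (q-1) := by
      ext j; simp only [Finset.mem_filter, Finset.mem_Icc]; omega
    have e2 : ((Finset.Icc 1 (q-1)).filter (fun j => 2*q < 2*q + 4*j ∧ 2*q + 4*j < 6*q))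
        = Finset.Icc 1 (q-1) := by
      ext j; simp only [Finset.mem_filter, Finset.mem_Icc]; omega
    have e3 : ((Finset.Icc 1 (q-1)).filter (fun j => 2*q < 3*q + 4*j ∧ 3*q + 4*j < 6*q))
        = Finset.Icc 1 (3*k+2) := by
      ext j; simp only [Finset.mem_filter, Finset.mem_Icc]; omega
    have hin' : torusInCount 4 q = (q - 1 - k) + (q - 1) + (3*k + 2) := by
      rw [hin, e1, e2, e3, Nat.card_Icc, Nat.card_Icc, Nat.card_Icc]; omega
    unfold torusSig
    rw [hcard, hin']
    have h4 : q / 4 = k := by omega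
    rw [h4]
    push_cast
    omega
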